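/- Fix p₀ ∈ Q and μ > 0. There exists a nonzero continuous function ψ ∈ C(𝕋³) satisfying ψ(q) = (μφ(q)/2)·∫_{𝕋³} φ(s)ψ(s)/ε(s) ds for all q ∈ 𝕋³ and ψ(q_i) ≠ 0 for i = 1,…,𝐧 (i.e. the operator h_μ(p₀) has a zero energy resonance) if and only if μ = μ₀. -/

import Mathlib

open MeasureTheory Real Filter

noncomputable section

instance : Fact (0 < 2 * Real.pi) := ⟨by positivity⟩

/-- the circle `ℝ/2πℤ`. -/
abbrev 𝕋 : Type := AddCircle (2 * Real.pi)

/-- the three-dimensional torus `𝕋³ = (ℝ/2πℤ)³`, carrying the product of the Haar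
(Lebesgue) measures of total mass `2π`; its total mass is `(2π)³`. -/
abbrev T3 : Type := Fin 3 → 𝕋

/-- the cosine function, lifted to the circle of circumference `2π`. -/
def ccos : 𝕋 → ℝ := Real.cos_periodic.lift

/-- the dispersion function `ε(p) = ∑_{j=1}^3 (1 - cos (m p⁽ʲ⁾))`. -/
def eps (m : ℕ) (p : T3) : ℝ := ∑ j : Fin 3, (1 - ccos (m • p j))

/-- the function `w(p,q) = ε(p) + ε(p+q) + ε(q)`. -/
def w (m : ℕ) (p q : T3) : ℝ := eps m p + eps m (p + q) + eps m q

/-- the representative of a point of `𝕋` in `[-π, π)`. -/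
def rep (x : 𝕋) : ℝ := ((AddCircle.equivIco (2 * Real.pi) (-Real.pi)) x : ℝ)

/-- Euclidean norm of the representative (in `[-π,π)³`) of a point of the torus. -/
def tnorm (p : T3) : ℝ := Real.sqrt (∑ j : Fin 3, rep (p j) ^ 2)

/-- Euclidean inner product of the representatives of two points of the torus. -/
def tinner (p q : T3) : ℝ := ∑ j : Fin 3, rep (p j) * rep (q j)

/-- a function on the torus is real-analytic if it lifts to an analytic
(automatically `2π`-periodic) function on `ℝ³`. -/
def TorusAnalytic (φ : T3 → ℝ) : Prop :=
  ∃ Φ : (Fin 3 → ℝ) → ℝ, (∀ x, AnalyticAt ℝ Φ x) ∧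
    ∀ x : Fin 3 → ℝ, Φ x = φ (fun j => (x j : 𝕋))

/-- evenness of a function on the torus. -/
def TorusEven (φ : T3 → ℝ) : Prop := ∀ p : T3, φ (-p) = φ p

/-- the Fredholm determinant `Δ_μ(p; z) = 1 - μ ∫_{𝕋³} φ(q)²/(w(p,q) - z) dq`. -/
def Delta (m : ℕ) (φ : T3 → ℝ) (μ : ℝ) (p : T3) (z : ℝ) : ℝ :=
  1 - μ * ∫ q : T3, φ q ^ 2 / (w m p q - z)


lemma cont_of_ta {φ : T3 → ℝ} (h : TorusAnalytic φ) : Continuous φ := by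
  obtain ⟨Φ, hΦ, hl⟩ := h
  have hq : Topology.IsQuotientMap (Pi.map (fun _ : Fin 3 => ((↑) : ℝ → 𝕋))) :=
    (IsOpenQuotientMap.piMap (fun _ => QuotientAddGroup.isOpenQuotientMap_mk)).isQuotientMap
  rw [hq.continuous_iff]
  have : φ ∘ Pi.map (fun _ : Fin 3 => ((↑) : ℝ → 𝕋)) = Φ := by
    funext x; exact (hl x).symm
  rw [this]
  exact continuous_iff_continuousAt.2 fun x => (hΦ x).continuousAt

/-- The Friedrichs model `h_μ(p₀)`, `p₀ ∈ Q`, has a zero energy resonance (a nonzero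
continuous solution `ψ` of `ψ(q) = (μφ(q)/2)∫ φ(s)ψ(s)/ε(s) ds` which is nonzero at every
point of `Q` where `φ` is nonzero) if and only if `μ = μ₀ = 2(∫ φ(s)²/ε(s) ds)⁻¹`. -/
theorem zero_energy_resonance_iff (m : ℕ) (hm : 3 ≤ m)
    (φ : T3 → ℝ) (hφa : TorusAnalytic φ) (hφe : TorusEven φ)
    (hn : 2 ≤ Set.ncard {q : T3 | eps m q = 0 ∧ φ q ≠ 0})
    (hint : Integrable (fun s : T3 => φ s ^ 2 / eps m s) volume)
    (hpos : 0 < ∫ s : T3, φ s ^ 2 / eps m s)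
    (p₀ : T3) (hp₀ : eps m p₀ = 0) (μ : ℝ) (hμ : 0 < μ) :
    (∃ ψ : T3 → ℝ, Continuous ψ ∧ ψ ≠ 0 ∧
      (∀ q : T3, ψ q = μ * φ q / 2 * ∫ s : T3, φ s * ψ s / eps m s) ∧
      (∀ q : T3, eps m q = 0 → φ q ≠ 0 → ψ q ≠ 0)) ↔
    μ = 2 * (∫ s : T3, φ s ^ 2 / eps m s)⁻¹ := by
  set I := ∫ s : T3, φ s ^ 2 / eps m s with hI
  have hIne : I ≠ 0 := ne_of_gt hpos
  constructor
  · rintro ⟨ψ, hc, hne, heq, hz⟩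
    set c := ∫ s : T3, φ s * ψ s / eps m s with hc'
    have hcne : c ≠ 0 := by
      intro h0
      apply hne
      funext q
      have := heq q
      simp [h0] at this
      simp [this]
    have hψ : ∀ q, ψ q = μ * c / 2 * φ q := by
      intro q; rw [heq q]; ring
    have hcalc : c = μ * c / 2 * I := by
      rw [hc', hI, ← integral_const_mul]
      congr 1
      funext s
      rw [hψ s]
      ring
    have key : (μ * I / 2 - 1) * c = 0 := by linear_combination -hcalc
    rcases mul_eq_zero.1 key with h | h
    · have h2 : μ * I = 2 := by linarith
      field_simp
      linarith
    · exact absurd h hcne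
  · intro hμ0
    refine ⟨φ, cont_of_ta hφa, ?_, ?_, fun q _ hq => hq⟩
    · intro h0
      exact hIne (by rw [hI, h0]; simp)
    · intro q
      have h1 : ∫ s : T3, φ s * φ s / eps m s = I := by
        rw [hI]; congr 1; funext s; ring
      rw [h1, hμ0]
      field_simp
end
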